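/- (Mahler's Theorem) Every continuous function f : ℤ_p → ℚ_p is the uniform limit of its Newton series: f(s) = Σ_k a_k C(s, k) where a_k = (Δ^k f)(0) and a_k → 0 p-adically. -/

import Mathlib

lemma descPoch_prod {R : Type*} [CommRing R] (x : R) (k : ℕ) :
    (descPochhammer R k).eval x = ∏ i ∈ Finset.range k, (x - i) := by
  induction k with
  | zero => simp
  | succ n ih =>
    rw [descPochhammer_succ_right, Polynomial.eval_mul, ih, Finset.prod_range_succ]
    simp

lemma choose_coe_eq (p : ℕ) [Fact p.Prime] (x : ℤ_[p]) (k : ℕ) :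
    ((Ring.choose x k : ℤ_[p]) : ℚ_[p]) =
      (∏ i ∈ Finset.range k, ((x : ℚ_[p]) - (i : ℚ_[p]))) / (k.factorial : ℚ_[p]) := by
  have h1 : ((Ring.choose x k : ℤ_[p]) : ℚ_[p]) =
      ((ascPochhammer ℤ_[p] k).eval (x - k + 1) : ℤ_[p]) / (k.factorial : ℚ_[p]) := rfl
  rw [h1, ← descPochhammer_eval_eq_ascPochhammer]
  congr 1
  have h2 : (((descPochhammer ℤ_[p] k).eval x : ℤ_[p]) : ℚ_[p])
      = ((descPochhammer ℤ_[p] k).map (PadicInt.Coe.ringHom)).eval (x : ℚ_[p]) := by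
    rw [Polynomial.eval_map]
    exact (Polynomial.eval₂_at_apply PadicInt.Coe.ringHom x).symm
  rw [h2, descPochhammer_map, descPoch_prod]

instance padicInt_isBoundedSMul_padic (p : ℕ) [Fact p.Prime] : IsBoundedSMul ℤ_[p] ℚ_[p] := by
  refine IsBoundedSMul.of_norm_smul_le fun r x => ?_
  rw [Algebra.smul_def, norm_mul]; rfl

/-- **Mahler's theorem**: every continuous `f : ℤ_p → ℚ_p` is the uniform limit of its
Newton series `∑_k a_k C(s,k)` with `a_k = (Δ^k f)(0)`, and `a_k → 0` p-adically. -/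
theorem mahler_theorem (p : ℕ) [Fact p.Prime] (f : ℤ_[p] → ℚ_[p]) (hf : Continuous f) :
    Filter.Tendsto (fun k => (fwdDiff (1 : ℤ_[p]))^[k] f 0) Filter.atTop (nhds 0) ∧
      TendstoUniformly
        (fun n (s : ℤ_[p]) => ∑ k ∈ Finset.range n,
          (fwdDiff (1 : ℤ_[p]))^[k] f 0 *
            ((∏ i ∈ Finset.range k, ((s : ℚ_[p]) - (i : ℚ_[p]))) / (k.factorial : ℚ_[p])))
        f Filter.atTop := by
  set F : C(ℤ_[p], ℚ_[p]) := ⟨f, hf⟩ with hF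
  constructor
  · exact PadicInt.fwdDiff_tendsto_zero F
  · have hs := (PadicInt.hasSum_mahler F).tendsto_sum_nat
    have hu : TendstoUniformly
        (fun n s => (∑ k ∈ Finset.range n, PadicInt.mahlerTerm ((fwdDiff (1 : ℤ_[p]))^[k] (⇑F) 0) k) s)
        f Filter.atTop :=
      ContinuousMap.tendsto_iff_tendstoUniformly.mp hs
    convert hu using 2 with n
    funext s
    rw [ContinuousMap.sum_apply]
    refine Finset.sum_congr rfl fun k _ => ?_
    rw [PadicInt.mahlerTerm_apply, mahler_apply, Algebra.smul_def, PadicInt.algebraMap_apply, choose_coe_eq, mul_comm]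
    rfl
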